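/- arXiv:1105.1608 — 2 statements merged into one kernel-verified Lean document; each statement's English description precedes it below -/
import Mathlib

section
/- Let T > 0, 0 < ε₁ < T and C > 0. Let E : [T − ε₁, T) → ℝ be a differentiable nonnegative function satisfying E′(t) ≤ (T − t)⁻¹ (C − E(t)/2) for all t ∈ [T − ε₁, T). Then the function t ↦ (E(t) − 2C)/√(T − t) is nonincreasing on [T − ε₁, T), and consequently E(t) ≤ 2C + √((T − t)/ε₁) · (E(T − ε₁) − 2C) for all t ∈ [T − ε₁, T). -/
/-- Singular differential inequality comparison: if `E ≥ 0` on `[T-ε₁, T)` satisfies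
`E′(t) ≤ (T-t)⁻¹ (C - E(t)/2)`, then `t ↦ (E(t) - 2C)/√(T-t)` is nonincreasing there,
and `E(t) ≤ 2C + √((T-t)/ε₁) (E(T-ε₁) - 2C)`. -/
theorem singular_ode_comparison
    (T ε₁ C : ℝ) (hT : 0 < T) (hε₁ : 0 < ε₁) (hε₁T : ε₁ < T) (hC : 0 < C)
    (E E' : ℝ → ℝ)
    (hderiv : ∀ t ∈ Set.Ico (T - ε₁) T, HasDerivAt E (E' t) t)
    (hnonneg : ∀ t ∈ Set.Ico (T - ε₁) T, 0 ≤ E t)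
    (hineq : ∀ t ∈ Set.Ico (T - ε₁) T, E' t ≤ (T - t)⁻¹ * (C - E t / 2)) :
    AntitoneOn (fun t => (E t - 2 * C) / Real.sqrt (T - t)) (Set.Ico (T - ε₁) T) ∧
      ∀ t ∈ Set.Ico (T - ε₁) T,
        E t ≤ 2 * C + Real.sqrt ((T - t) / ε₁) * (E (T - ε₁) - 2 * C) := by
  have hs : ∀ t ∈ Set.Ico (T - ε₁) T, 0 < T - t := fun t ht => sub_pos.2 ht.2
  set F : ℝ → ℝ := fun t => (E t - 2 * C) / Real.sqrt (T - t) with hFdef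
  have hF : ∀ t ∈ Set.Ico (T - ε₁) T,
      HasDerivAt F ((E' t * Real.sqrt (T - t) -
        (E t - 2 * C) * (-(1 / (2 * Real.sqrt (T - t))))) / (Real.sqrt (T - t)) ^ 2) t := by
    intro t ht
    have hst := hs t ht
    have hc : HasDerivAt (fun t => E t - 2 * C) (E' t) t := (hderiv t ht).sub_const _
    have h1 : HasDerivAt (fun t => T - t) (-1) t := by
      simpa using (hasDerivAt_id t).const_sub T
    have hd : HasDerivAt (fun t => Real.sqrt (T - t)) (-(1 / (2 * Real.sqrt (T - t)))) t := by
      have := (Real.hasDerivAt_sqrt (ne_of_gt hst)).comp t h1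
      simpa [mul_comm, Function.comp_def] using this
    exact hc.div hd (by positivity)
  have hF' : ∀ t ∈ Set.Ioo (T - ε₁) T,
      (E' t * Real.sqrt (T - t) -
        (E t - 2 * C) * (-(1 / (2 * Real.sqrt (T - t))))) / (Real.sqrt (T - t)) ^ 2 ≤ 0 := by
    intro t ht
    have ht' : t ∈ Set.Ico (T - ε₁) T := ⟨le_of_lt ht.1, ht.2⟩
    have hst := hs t ht'
    have hsq : 0 < Real.sqrt (T - t) := Real.sqrt_pos.2 hst
    have hsqsq : Real.sqrt (T - t) * Real.sqrt (T - t) = T - t := Real.mul_self_sqrt hst.le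
    apply div_nonpos_of_nonpos_of_nonneg _ (by positivity)
    have h1 : E' t ≤ (T - t)⁻¹ * (C - E t / 2) := hineq t ht'
    have h2 : E' t * Real.sqrt (T - t) ≤ (T - t)⁻¹ * (C - E t / 2) * Real.sqrt (T - t) :=
      mul_le_mul_of_nonneg_right h1 hsq.le
    have h3 : (T - t)⁻¹ * (C - E t / 2) * Real.sqrt (T - t)
        = (E t - 2 * C) * (-(1 / (2 * Real.sqrt (T - t)))) := by
      field_simp
      linear_combination (2 * C - E t) * hsqsq
    linarith [h2, h3]
  have hanti : AntitoneOn F (Set.Ico (T - ε₁) T) := by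
    apply antitoneOn_of_deriv_nonpos (convex_Ico _ _)
    · intro t ht
      exact (hF t ht).continuousAt.continuousWithinAt
    · intro t ht
      rw [interior_Ico] at ht
      exact (hF t ⟨ht.1.le, ht.2⟩).differentiableAt.differentiableWithinAt
    · intro t ht
      rw [interior_Ico] at ht
      rw [(hF t ⟨ht.1.le, ht.2⟩).deriv]
      exact hF' t ht
  refine ⟨hanti, fun t ht => ?_⟩
  have hmem : T - ε₁ ∈ Set.Ico (T - ε₁) T := ⟨le_refl _, by linarith⟩
  have hle : F t ≤ F (T - ε₁) := hanti hmem ht ht.1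
  have hst := hs t ht
  have hsq : 0 < Real.sqrt (T - t) := Real.sqrt_pos.2 hst
  have hε : T - (T - ε₁) = ε₁ := by ring
  have hFt : F t = (E t - 2 * C) / Real.sqrt (T - t) := rfl
  have hFe : F (T - ε₁) = (E (T - ε₁) - 2 * C) / Real.sqrt ε₁ := by
    simp [hFdef, hε]
  have h4 : E t - 2 * C ≤ Real.sqrt (T - t) * ((E (T - ε₁) - 2 * C) / Real.sqrt ε₁) := by
    have := mul_le_mul_of_nonneg_left hle hsq.le
    rw [hFt, hFe] at this
    calc E t - 2 * C = Real.sqrt (T - t) * ((E t - 2 * C) / Real.sqrt (T - t)) := by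
          field_simp
      _ ≤ _ := this
  have hdiv : Real.sqrt ((T - t) / ε₁) = Real.sqrt (T - t) / Real.sqrt ε₁ :=
    Real.sqrt_div hst.le _
  rw [hdiv]
  calc E t = 2 * C + (E t - 2 * C) := by ring
    _ ≤ 2 * C + Real.sqrt (T - t) * ((E (T - ε₁) - 2 * C) / Real.sqrt ε₁) := by linarith
    _ = 2 * C + Real.sqrt (T - t) / Real.sqrt ε₁ * (E (T - ε₁) - 2 * C) := by ring
end

section
/- Let T ∈ ℝ, t₀ < T, 0 < η < 1, set h = (1 + η)/2, and let ᾱ > 0, J > 0. Define u : [t₀, T) → ℝ by u(t) = { (η ᾱ/(1 − h)) [ (T − t₀)^{1−h} − (T − t)^{1−h} ] + J^{−η} }^{1/η}. Then u is differentiable on [t₀, T), satisfies u′(t) = ᾱ u(t)^{1−η} (T − t)^{−h} and u(t₀) = J^{−1}, and u(t) ≤ { c (T − t₀)^{1−h} + J^{−η} }^{1/η} for all t ∈ [t₀, T), where c = η ᾱ/(1 − h). Moreover, if v : [t₀, T) → ℝ is continuous, nonnegative, and satisfies v(t) ≤ J^{−1} + ᾱ ∫_{t₀}^t v(s)^{1−η}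 (T − s)^{−h} ds for all t ∈ [t₀, T), then v(t) ≤ u(t) for all t ∈ [t₀, T). -/
open intervalIntegral

/-- The explicit solution of the Bernoulli-type singular ODE
`u′ = ᾱ u^{1-η} (T-t)^{-h}`, `u(t₀) = J⁻¹`, with `h = (1+η)/2`. -/
noncomputable def bernoulliSol (T t₀ η h ᾱ J : ℝ) : ℝ → ℝ := fun t =>
  (η * ᾱ / (1 - h) * ((T - t₀) ^ (1 - h) - (T - t) ^ (1 - h)) + J ^ (-η)) ^ (1 / η)

/-- The explicit solution `u` of the Bernoulli-type singular ODE satisfies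
`u′(t) = ᾱ u(t)^{1-η} (T-t)^{-h}`, `u(t₀) = J⁻¹`,
`u(t) ≤ (c (T-t₀)^{1-h} + J^{-η})^{1/η}` with `c = η ᾱ/(1-h)`, and every continuous
nonnegative `v` with `v(t) ≤ J⁻¹ + ᾱ ∫_{t₀}^t v(s)^{1-η} (T-s)^{-h} ds` is bounded
by `u`. -/
theorem bernoulli_singular_ode
    (T t₀ η h ᾱ J : ℝ) (ht₀ : t₀ < T) (hη0 : 0 < η) (hη1 : η < 1)
    (hh : h = (1 + η) / 2) (hᾱ : 0 < ᾱ) (hJ : 0 < J) :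
    (∀ t ∈ Set.Ico t₀ T,
        HasDerivAt (bernoulliSol T t₀ η h ᾱ J)
          (ᾱ * (bernoulliSol T t₀ η h ᾱ J t) ^ (1 - η) * (T - t) ^ (-h)) t) ∧
      bernoulliSol T t₀ η h ᾱ J t₀ = J⁻¹ ∧
      (∀ t ∈ Set.Ico t₀ T,
        bernoulliSol T t₀ η h ᾱ J t
          ≤ (η * ᾱ / (1 - h) * (T - t₀) ^ (1 - h) + J ^ (-η)) ^ (1 / η)) ∧
      ∀ v : ℝ → ℝ, ContinuousOn v (Set.Ico t₀ T) → (∀ t ∈ Set.Ico t₀ T, 0 ≤ v t) →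
        (∀ t ∈ Set.Ico t₀ T,
          v t ≤ J⁻¹ + ᾱ * ∫ s in t₀..t, v s ^ (1 - η) * (T - s) ^ (-h)) →
        ∀ t ∈ Set.Ico t₀ T, v t ≤ bernoulliSol T t₀ η h ᾱ J t := by
  have h1h : (0:ℝ) < 1 - h := by rw [hh]; linarith
  have hηne : η ≠ 0 := ne_of_gt hη0
  set c : ℝ := η * ᾱ / (1 - h) with hcdef
  have hcpos : 0 < c := by
    apply div_pos (by positivity) h1h
  set f : ℝ → ℝ := fun t => c * ((T - t₀) ^ (1 - h) - (T - t) ^ (1 - h)) + J ^ (-η)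
    with hfdef
  have hJη : (0:ℝ) < J ^ (-η) := Real.rpow_pos_of_pos hJ _
  have hfmono : ∀ t, t₀ ≤ t → t < T →
      (T - t) ^ (1 - h) ≤ (T - t₀) ^ (1 - h) := by
    intro t h1 h2
    exact Real.rpow_le_rpow (by linarith) (by linarith) h1h.le
  have hfpos : ∀ t ∈ Set.Ico t₀ T, 0 < f t := by
    intro t ht
    have := hfmono t ht.1 ht.2
    have hc' : 0 ≤ c * ((T - t₀) ^ (1 - h) - (T - t) ^ (1 - h)) := by
      apply mul_nonneg hcpos.le; linarith
    simp only [hfdef]; linarith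
  have hfnonneg : ∀ t ∈ Set.Ico t₀ T, 0 ≤ f t := fun t ht => (hfpos t ht).le
  -- derivative of the inner function
  have hfderiv : ∀ t ∈ Set.Ico t₀ T,
      HasDerivAt f (η * ᾱ * (T - t) ^ (-h)) t := by
    intro t ht
    have hTt : 0 < T - t := sub_pos.2 ht.2
    have h1 : HasDerivAt (fun s : ℝ => T - s) (-1) t := by
      simpa using (hasDerivAt_id t).const_sub T
    have h2 : HasDerivAt (fun s : ℝ => (T - s) ^ (1 - h))
        (-1 * (1 - h) * (T - t) ^ (1 - h - 1)) t :=
      h1.rpow_const (Or.inl (ne_of_gt hTt))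
    have h3 : HasDerivAt f
        (c * (0 - (-1 * (1 - h) * (T - t) ^ (1 - h - 1)))) t := by
      exact (((hasDerivAt_const t ((T - t₀) ^ (1 - h))).sub h2).const_mul c).add_const _
    convert h3 using 1
    have : (1 : ℝ) - h - 1 = -h := by ring
    rw [this, hcdef]
    field_simp
    ring
  have hbs : bernoulliSol T t₀ η h ᾱ J = fun t => f t ^ (1 / η) := rfl
  -- Part 1
  have part1 : ∀ t ∈ Set.Ico t₀ T,
      HasDerivAt (bernoulliSol T t₀ η h ᾱ J)
        (ᾱ * (bernoulliSol T t₀ η h ᾱ J t) ^ (1 - η) * (T - t) ^ (-h)) t := by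
    intro t ht
    have hft := hfpos t ht
    have hd := (hfderiv t ht).rpow_const (p := 1 / η) (Or.inl (ne_of_gt hft))
    rw [hbs]
    convert hd using 1
    have e1 : (f t ^ (1 / η)) ^ (1 - η) = f t ^ (1 / η * (1 - η)) := by
      rw [← Real.rpow_mul hft.le]
    show ᾱ * (f t ^ (1 / η)) ^ (1 - η) * (T - t) ^ (-h)
      = η * ᾱ * (T - t) ^ (-h) * (1 / η) * f t ^ (1 / η - 1)
    rw [e1]
    have e2 : 1 / η * (1 - η) = 1 / η - 1 := by field_simp
    rw [e2]
    have e3 : η * ᾱ * (T - t) ^ (-h) * (1 / η) = ᾱ * (T - t) ^ (-h) := by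
      field_simp
    rw [e3]
    ring
  -- Part 2
  have part2 : bernoulliSol T t₀ η h ᾱ J t₀ = J⁻¹ := by
    have hft0 : f t₀ = J ^ (-η) := by simp [hfdef]
    rw [hbs]
    show f t₀ ^ (1 / η) = J⁻¹
    rw [hft0, ← Real.rpow_mul hJ.le,
      show -η * (1 / η) = -1 by field_simp, Real.rpow_neg_one]
  -- Part 3
  have part3 : ∀ t ∈ Set.Ico t₀ T,
      bernoulliSol T t₀ η h ᾱ J t
        ≤ (c * (T - t₀) ^ (1 - h) + J ^ (-η)) ^ (1 / η) := by
    intro t ht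
    rw [hbs]
    apply Real.rpow_le_rpow (hfnonneg t ht) _ (by positivity)
    have hTt : (0:ℝ) ≤ (T - t) ^ (1 - h) :=
      Real.rpow_nonneg (by linarith [ht.2]) _
    have : c * ((T - t₀) ^ (1 - h) - (T - t) ^ (1 - h)) ≤ c * (T - t₀) ^ (1 - h) := by
      apply mul_le_mul_of_nonneg_left _ hcpos.le
      linarith
    simp only [hfdef]; linarith
  refine ⟨part1, part2, part3, ?_⟩
  -- Part 4 : comparison
  intro v hvcont hvnn hvineq t ht
  set g : ℝ → ℝ := fun s => v s ^ (1 - η) * (T - s) ^ (-h) with hgdef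
  have hgnn : ∀ s ∈ Set.Ico t₀ T, 0 ≤ g s := by
    intro s hs
    apply mul_nonneg (Real.rpow_nonneg (hvnn s hs) _) (Real.rpow_nonneg (by linarith [hs.2]) _)
  have hgcont : ContinuousOn g (Set.Ico t₀ T) := by
    apply ContinuousOn.mul
    · exact hvcont.rpow_const (fun s hs => Or.inr (by linarith))
    · apply ContinuousOn.rpow_const
      · exact (continuous_const.sub continuous_id).continuousOn
      · intro s hs
        exact Or.inl (ne_of_gt (sub_pos.2 hs.2))
  set F : ℝ → ℝ := fun t => J⁻¹ + ᾱ * ∫ s in t₀..t, g s with hFdef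
  have hgint : ∀ b ∈ Set.Ico t₀ T, IntervalIntegrable g MeasureTheory.volume t₀ b := by
    intro b hb
    apply ContinuousOn.intervalIntegrable
    apply hgcont.mono
    rw [Set.uIcc_of_le hb.1]
    exact fun s hs => ⟨hs.1, lt_of_le_of_lt hs.2 hb.2⟩
  have hFge : ∀ b ∈ Set.Ico t₀ T, J⁻¹ ≤ F b := by
    intro b hb
    have : 0 ≤ ∫ s in t₀..b, g s := by
      apply intervalIntegral.integral_nonneg hb.1
      intro s hs
      exact hgnn s ⟨hs.1, lt_of_le_of_lt hs.2 hb.2⟩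
    simp only [hFdef]
    nlinarith
  have hFpos : ∀ b ∈ Set.Ico t₀ T, 0 < F b := fun b hb =>
    lt_of_lt_of_le (inv_pos.2 hJ) (hFge b hb)
  have hvF : ∀ b ∈ Set.Ico t₀ T, v b ≤ F b := fun b hb => hvineq b hb
  -- derivative of F at interior points
  have hFderiv : ∀ x ∈ Set.Ioo t₀ T, HasDerivAt F (ᾱ * g x) x := by
    intro x hx
    have hxI : x ∈ Set.Ico t₀ T := ⟨hx.1.le, hx.2⟩
    have hmem : Set.Ico t₀ T ∈ nhds x := Ico_mem_nhds hx.1 hx.2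
    have hgcx : ContinuousAt g x := (hgcont x hxI).continuousAt hmem
    have hmeas : StronglyMeasurableAtFilter g (nhds x) MeasureTheory.volume := by
      refine ContinuousOn.stronglyMeasurableAtFilter isOpen_Ioo
        (hgcont.mono Set.Ioo_subset_Ico_self) x hx
    have hint := hgint x hxI
    have hD := intervalIntegral.integral_hasDerivAt_right hint hmeas hgcx
    have := (hD.const_mul ᾱ).const_add J⁻¹
    simpa [hFdef] using this
  -- now fix t and compare on [t₀, t]
  rcases eq_or_lt_of_le ht.1 with heq | hlt
  · -- t = t₀
    have := hvineq t ht
    rw [← heq] at this ⊢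
    simpa [part2, intervalIntegral.integral_same] using this
  · -- t₀ < t < T
    set H : ℝ → ℝ := fun x => f x - F x ^ η with hHdef
    have hIccsub : Set.Icc t₀ t ⊆ Set.Ico t₀ T := fun s hs =>
      ⟨hs.1, lt_of_le_of_lt hs.2 ht.2⟩
    have hIoosub : Set.Ioo t₀ t ⊆ Set.Ioo t₀ T := fun s hs =>
      ⟨hs.1, lt_trans hs.2 ht.2⟩
    -- H has nonnegative derivative on Ioo t₀ t
    have hHderiv : ∀ x ∈ Set.Ioo t₀ t,
        HasDerivAt H (η * ᾱ * (T - x) ^ (-h) - ᾱ * g x * η * F x ^ (η - 1)) x := by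
      intro x hx
      have hxI : x ∈ Set.Ico t₀ T := hIccsub ⟨hx.1.le, hx.2.le⟩
      have hFx := hFpos x hxI
      have h1 := hfderiv x hxI
      have h2 := (hFderiv x (hIoosub hx)).rpow_const (p := η) (Or.inl (ne_of_gt hFx))
      exact h1.sub h2
    have hHderiv_nonneg : ∀ x ∈ Set.Ioo t₀ t,
        0 ≤ η * ᾱ * (T - x) ^ (-h) - ᾱ * g x * η * F x ^ (η - 1) := by
      intro x hx
      have hxI : x ∈ Set.Ico t₀ T := hIccsub ⟨hx.1.le, hx.2.le⟩
      have hFx := hFpos x hxI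
      have hTx : (0:ℝ) < T - x := sub_pos.2 hxI.2
      have hTxh : (0:ℝ) < (T - x) ^ (-h) := Real.rpow_pos_of_pos hTx _
      have hvle : v x ^ (1 - η) ≤ F x ^ (1 - η) :=
        Real.rpow_le_rpow (hvnn x hxI) (hvF x hxI) (by linarith)
      have hFη : F x ^ (η - 1) = (F x ^ (1 - η))⁻¹ := by
        rw [show η - 1 = -(1 - η) by ring, Real.rpow_neg hFx.le]
      have hF1η : (0:ℝ) < F x ^ (1 - η) := Real.rpow_pos_of_pos hFx _
      have key : v x ^ (1 - η) * F x ^ (η - 1) ≤ 1 := by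
        rw [hFη]
        rw [← div_eq_mul_inv]
        exact div_le_one_of_le₀ hvle hF1η.le
      have : ᾱ * g x * η * F x ^ (η - 1)
          = (η * ᾱ * (T - x) ^ (-h)) * (v x ^ (1 - η) * F x ^ (η - 1)) := by
        simp only [hgdef]; ring
      rw [this]
      nlinarith [mul_nonneg (mul_nonneg (mul_nonneg hη0.le hᾱ.le) hTxh.le)
        (sub_nonneg.2 key), mul_pos (mul_pos hη0 hᾱ) hTxh]
    -- continuity of H on Icc t₀ t
    have hgc' : ContinuousOn g (Set.Icc t₀ t) := hgcont.mono hIccsub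
    have hFcont : ContinuousOn F (Set.Icc t₀ t) := by
      have hint : MeasureTheory.IntegrableOn g (Set.uIcc t₀ t) MeasureTheory.volume := by
        rw [Set.uIcc_of_le hlt.le]
        exact hgc'.integrableOn_Icc
      have hprim := intervalIntegral.continuousOn_primitive_interval hint
      rw [Set.uIcc_of_le hlt.le] at hprim
      exact continuousOn_const.add (continuousOn_const.mul hprim)
    have hfcont : ContinuousOn f (Set.Icc t₀ t) := by
      refine (continuousOn_const.mul (ContinuousOn.sub continuousOn_const ?_)).add
        continuousOn_const
      exact ((continuous_const.sub continuous_id).continuousOn).rpow_const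
        (fun x _ => Or.inr h1h.le)
    have hHcont : ContinuousOn H (Set.Icc t₀ t) := by
      apply hfcont.sub
      apply hFcont.rpow_const
      intro x hx
      exact Or.inl (ne_of_gt (hFpos x (hIccsub hx)))
    -- monotonicity
    have hintIcc : interior (Set.Icc t₀ t) = Set.Ioo t₀ t := interior_Icc
    have hHmono : MonotoneOn H (Set.Icc t₀ t) := by
      apply monotoneOn_of_deriv_nonneg (convex_Icc t₀ t) hHcont
      · rw [hintIcc]
        intro x hx
        exact ((hHderiv x hx).differentiableAt).differentiableWithinAt
      · rw [hintIcc]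
        intro x hx
        rw [(hHderiv x hx).deriv]
        exact hHderiv_nonneg x hx
    have hH0 : H t₀ = 0 := by
      have hft0 : f t₀ = J ^ (-η) := by simp [hfdef]
      have hFt0 : F t₀ = J⁻¹ := by
        simp [hFdef, intervalIntegral.integral_same]
      simp only [hHdef, hft0, hFt0]
      rw [Real.inv_rpow hJ.le, Real.rpow_neg hJ.le, sub_self]
    have hHt : 0 ≤ H t := by
      rw [← hH0]
      exact hHmono (Set.left_mem_Icc.2 hlt.le) (Set.right_mem_Icc.2 hlt.le) hlt.le
    -- conclude
    have hFt := hFpos t ht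
    have hFη_le : F t ^ η ≤ f t := by
      simp only [hHdef] at hHt; linarith
    have hFle : F t ≤ f t ^ (1 / η) := by
      have := Real.rpow_le_rpow (Real.rpow_nonneg hFt.le η) hFη_le (by positivity : (0:ℝ) ≤ 1/η)
      rwa [← Real.rpow_mul hFt.le, mul_one_div, div_self hηne, Real.rpow_one] at this
    calc v t ≤ F t := hvF t ht
      _ ≤ f t ^ (1 / η) := hFle
      _ = bernoulliSol T t₀ η h ᾱ J t := by rw [hbs]
end
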